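/- Let B be a Banach algebra, ω: B → ℂ a continuous character, Φ: B → L(E) a bounded anti-representation on a Banach space E, and Ξ: B^ω → E* a bounded linear map on the kernel B^ω = ker ω which is a left B^ω-module map, i.e., Ξ(ab) = Φ̌(a)(Ξ(b)) for all a, b ∈ B^ω. If B^ω possesses a bounded right approximate identity {b_j}, i.e., a norm-bounded net with ‖a b_j − a‖ → 0 for every a ∈ B^ω, then there exists φ₀ ∈ E* with Ξ(a) = Φ̌(a)(φ₀) for all a ∈ B^ω. -/

import Mathlib

open Filter Topology

/-- If the kernel `B^ω` of a continuous character on a Banach algebra has a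
bounded right approximate identity, then every bounded left `B^ω`-module map
`Ξ : B^ω → E*` (w.r.t. a bounded anti-representation `Φ`) is of the form
`Ξ a = Φ̌(a) φ₀` for some `φ₀ ∈ E*`. -/
theorem stmt1 {B E ι : Type*} [NormedRing B] [NormedAlgebra ℂ B]
    [NormedAddCommGroup E] [NormedSpace ℂ E] [CompleteSpace E]
    [Nonempty ι] [SemilatticeSup ι]
    (ω : B →L[ℂ] ℂ) (hωm : ∀ a b : B, ω (a * b) = ω a * ω b) (hω0 : ω ≠ 0)
    (Φ : B →ₗ[ℂ] (E →L[ℂ] E)) (hΦanti : ∀ a b : B, Φ (a * b) = (Φ b).comp (Φ a))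
    (CΦ : ℝ) (hΦb : ∀ a : B, ‖Φ a‖ ≤ CΦ * ‖a‖)
    (Ξ : B →ₗ[ℂ] (E →L[ℂ] ℂ)) (CΞ : ℝ) (hΞb : ∀ a : B, ‖Ξ a‖ ≤ CΞ * ‖a‖)
    (hΞmod : ∀ a ∈ LinearMap.ker (ω : B →ₗ[ℂ] ℂ), ∀ b ∈ LinearMap.ker (ω : B →ₗ[ℂ] ℂ), Ξ (a * b) = (Ξ b).comp (Φ a))
    (bj : ι → B) (hbmem : ∀ j, bj j ∈ LinearMap.ker (ω : B →ₗ[ℂ] ℂ))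
    (Cb : ℝ) (hbb : ∀ j, ‖bj j‖ ≤ Cb)
    (hbai : ∀ a ∈ LinearMap.ker (ω : B →ₗ[ℂ] ℂ),
      Tendsto (fun j => ‖a * bj j - a‖) atTop (nhds 0)) :
    ∃ φ₀ : E →L[ℂ] ℂ, ∀ a ∈ LinearMap.ker (ω : B →ₗ[ℂ] ℂ), Ξ a = φ₀.comp (Φ a) := by
  open Metric in
  -- CΞ ≥ 0
  obtain ⟨a₀, ha₀⟩ : ∃ a : B, ω a ≠ 0 := by
    by_contra h; push_neg at h; exact hω0 (by ext a; simpa using h a)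
  have ha₀' : 0 < ‖a₀‖ := by
    rcases eq_or_ne a₀ 0 with rfl | h
    · simp at ha₀
    · exact norm_pos_iff.mpr h
  have hCΞ : 0 ≤ CΞ := by
    have := (norm_nonneg (Ξ a₀)).trans (hΞb a₀)
    exact nonneg_of_mul_nonneg_right (by linarith [mul_comm CΞ ‖a₀‖]) ha₀'
  have hCb : 0 ≤ Cb := (norm_nonneg _).trans (hbb (Classical.arbitrary ι))
  -- the net in the weak dual
  set f : ι → WeakDual ℂ E := fun j => StrongDual.toWeakDual (Ξ (bj j)) with hf
  have hmem : ∀ j, f j ∈ (WeakDual.toStrongDual ⁻¹' closedBall 0 (CΞ * Cb)) := by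
    intro j
    simp only [Set.mem_preimage, mem_closedBall, dist_zero_right]
    exact (hΞb (bj j)).trans (mul_le_mul_of_nonneg_left (hbb j) hCΞ)
  obtain ⟨φ₀, -, hφ₀⟩ := (WeakDual.isCompact_closedBall (𝕜 := ℂ) (E := E) 0 (CΞ * Cb)).exists_clusterPt (f := map f atTop)
    (le_principal_iff.mpr (mem_map.mpr (Eventually.of_forall hmem)))
  refine ⟨WeakDual.toStrongDual φ₀, fun a ha => ?_⟩
  ext x
  -- tendsto: Ξ (bj j) (Φ a x) → Ξ a x
  have habj : ∀ j, a * bj j ∈ LinearMap.ker (ω : B →ₗ[ℂ] ℂ) := fun j => by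
    have := hωm a (bj j)
    simp only [LinearMap.mem_ker, ContinuousLinearMap.coe_coe] at *
    rw [this, hbmem j, mul_zero]
  have htend : Tendsto (fun j => Ξ (bj j) ((Φ a) x)) atTop (𝓝 (Ξ a x)) := by
    have h1 : ∀ j, Ξ (bj j) ((Φ a) x) = Ξ (a * bj j) x := fun j => by
      rw [hΞmod a ha (bj j) (hbmem j)]; rfl
    simp only [h1]
    rw [tendsto_iff_norm_sub_tendsto_zero]
    have hb2 : Tendsto (fun j => CΞ * ‖a * bj j - a‖ * ‖x‖) atTop (𝓝 0) := by
      have := (hbai a ha).const_mul CΞ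
      simpa using this.mul_const ‖x‖
    refine squeeze_zero (fun j => norm_nonneg _) (fun j => ?_) hb2
    calc ‖Ξ (a * bj j) x - Ξ a x‖ = ‖(Ξ (a * bj j) - Ξ a) x‖ := by simp
      _ ≤ ‖Ξ (a * bj j) - Ξ a‖ * ‖x‖ := (Ξ (a * bj j) - Ξ a).le_opNorm x
      _ ≤ CΞ * ‖a * bj j - a‖ * ‖x‖ := by
          gcongr
          have := hΞb (a * bj j - a)
          rwa [map_sub] at this
  -- cluster: Ξ (bj j) (Φ a x) clusters at φ₀ (Φ a x)
  have hclust : ClusterPt (φ₀ ((Φ a) x)) (map (fun j => Ξ (bj j) ((Φ a) x)) atTop) := by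
    have hev : ContinuousAt (fun ψ : WeakDual ℂ E => ψ ((Φ a) x)) φ₀ :=
      (WeakBilin.eval_continuous _ _).continuousAt
    have h := hφ₀.map hev tendsto_map
    rw [Filter.map_map] at h
    exact h
  exact (eq_of_nhds_neBot (hclust.mono htend)).symm
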